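/- Let (L, ·) be an algebra over a field of characteristic ≠ 2 which is both a left Leibniz algebra (u·(v·w) = (u·v)·w + v·(u·w)) and a right Leibniz algebra ((v·w)·u = (v·u)·w + v·(w·u)). Define [u,v] = (u·v − v·u)/2 and u∘v = (u·v + v·u)/2. Then: (a) (L, [ , ]) is a Lie algebra; (b) u∘v lies in the center of (L, [ , ]) for all u, v; (c) [u,v]∘w = 0 and (u∘v)∘w = 0 for all u, v, w. Conversely, if a bilinear product u·v = [u,v] + u∘v satisfies (a), (b), (c), then (L, ·) is a symmetric Leibniz algebra. -/

import Mathlib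

set_option maxHeartbeats 1000000


/-- Characterization of symmetric Leibniz algebras: a bilinear product on a vector space over
a field of characteristic ≠ 2 is both a left and a right Leibniz product if and only if its
antisymmetric part `[u,v] = (u·v - v·u)/2` satisfies the Jacobi identity, its symmetric part
`u∘v = (u·v + v·u)/2` takes values in the center of the bracket, and
`[u,v]∘w = 0` and `(u∘v)∘w = 0` for all `u,v,w`. -/
theorem symmetric_leibniz_characterization {K : Type*} [Field K] (h2 : (2 : K) ≠ 0)
    {L : Type*} [AddCommGroup L] [Module K L]
    (mul : L →ₗ[K] L →ₗ[K] L) :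
    let br : L → L → L := fun u v => ((2 : K)⁻¹) • (mul u v - mul v u)
    let ci : L → L → L := fun u v => ((2 : K)⁻¹) • (mul u v + mul v u)
    ((∀ u v w : L, mul u (mul v w) = mul (mul u v) w + mul v (mul u w)) ∧
      (∀ u v w : L, mul (mul v w) u = mul (mul v u) w + mul v (mul w u))) ↔
    ((∀ u v w : L, br (br u v) w + br (br v w) u + br (br w u) v = 0) ∧
      (∀ u v w : L, br (ci u v) w = 0) ∧
      (∀ u v w : L, ci (br u v) w = 0) ∧
      (∀ u v w : L, ci (ci u v) w = 0)) := by
  intro br ci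
  have h4 : (4 : K) ≠ 0 := by
    rw [show (4 : K) = 2 * 2 by norm_num]; exact mul_ne_zero h2 h2
  constructor
  · rintro ⟨hLL, hRL⟩
    have hsq1 : ∀ u w : L, mul (mul u u) w = 0 := fun u w =>
      right_eq_add.mp (hLL u u w)
    have hsq2 : ∀ u w : L, mul w (mul u u) = 0 := fun u w =>
      left_eq_add.mp (hRL u w u)
    have P1 : ∀ u v w : L, mul (mul u v) w + mul (mul v u) w = 0 := by
      intro u v w
      have h := hsq1 (u + v) w
      simp only [map_add, LinearMap.add_apply, hsq1, zero_add, add_zero] at h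
      linear_combination (norm := match_scalars <;> (try field_simp [h4]) <;> try ring1) h
    have P2 : ∀ u v w : L, mul w (mul u v) + mul w (mul v u) = 0 := by
      intro u v w
      have h := hsq2 (u + v) w
      simp only [map_add, LinearMap.add_apply, hsq2, zero_add, add_zero] at h
      linear_combination (norm := match_scalars <;> (try field_simp [h4]) <;> try ring1) h
    have P3 : ∀ u v w : L, mul u (mul v w) + mul (mul v w) u = 0 := by
      intro u v w
      linear_combination (norm := match_scalars <;> (try field_simp [h4]) <;> try ring1) hLL u v w + hRL u v w + P1 u v w + P2 u w v
    have P4 : ∀ u v w : L, mul (mul u v) w + mul (mul v w) u + mul (mul w u) v = 0 := by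
      intro u v w
      linear_combination (norm := match_scalars <;> (try field_simp [h4]) <;> try ring1) -(hLL u v w) + P3 u v w + P3 v w u - P2 u w v
    refine ⟨?_, ?_, ?_, ?_⟩ <;> intro u v w <;>
      simp only [br, ci, map_add, map_smul, map_sub, LinearMap.add_apply,
        LinearMap.smul_apply, LinearMap.sub_apply]
    · linear_combination (norm := match_scalars <;> (try field_simp [h4]) <;> try ring1) ((2:K)⁻¹) • P4 u v w - ((2:K)⁻¹) • P4 v u w
        - ((4:K)⁻¹) • (P3 w u v + P3 u v w + P3 v w u)
        + ((4:K)⁻¹) • (P3 w v u + P3 u w v + P3 v u w)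
    · linear_combination (norm := match_scalars <;> (try field_simp [h4]) <;> try ring1) ((4:K)⁻¹) • P1 u v w - ((4:K)⁻¹) • P2 u v w
    · linear_combination (norm := match_scalars <;> (try field_simp [h4]) <;> try ring1) ((4:K)⁻¹) • P3 w u v - ((4:K)⁻¹) • P3 w v u
    · linear_combination (norm := match_scalars <;> (try field_simp [h4]) <;> try ring1) ((4:K)⁻¹) • P1 u v w + ((4:K)⁻¹) • P2 u v w
  · rintro ⟨J, H1, H2, H3⟩
    simp only [br, ci, map_add, map_smul, map_sub, LinearMap.add_apply,
      LinearMap.smul_apply, LinearMap.sub_apply] at J H1 H2 H3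
    have k1 : ∀ u v w : L, mul (mul u v) w + mul (mul v u) w = 0 := by
      intro u v w
      linear_combination (norm := match_scalars <;> (try field_simp [h4]) <;> try ring1) (2:K) • H1 u v w + (2:K) • H3 u v w
    have k2 : ∀ u v w : L, mul w (mul u v) + mul w (mul v u) = 0 := by
      intro u v w
      linear_combination (norm := match_scalars <;> (try field_simp [h4]) <;> try ring1) (2:K) • H3 u v w - (2:K) • H1 u v w
    have k3 : ∀ u v w : L, mul u (mul v w) + mul (mul v w) u = 0 := by
      intro u v w
      linear_combination (norm := match_scalars <;> (try field_simp [h4]) <;> try ring1) (2:K) • H2 v w u + ((2:K)⁻¹) • k1 v w u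
        + ((2:K)⁻¹) • k2 v w u
    have k4 : ∀ u v w : L, mul (mul u v) w + mul (mul v w) u + mul (mul w u) v = 0 := by
      intro u v w
      linear_combination (norm := match_scalars <;> (try field_simp [h4]) <;> try ring1) J u v w
        + ((2:K)⁻¹) • k1 u v w + ((4:K)⁻¹) • k3 w u v - ((4:K)⁻¹) • k3 w v u
        + ((2:K)⁻¹) • k1 v w u + ((4:K)⁻¹) • k3 u v w - ((4:K)⁻¹) • k3 u w v
        + ((2:K)⁻¹) • k1 w u v + ((4:K)⁻¹) • k3 v w u - ((4:K)⁻¹) • k3 v u w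
    constructor
    · intro u v w
      linear_combination (norm := match_scalars <;> (try field_simp [h4]) <;> try ring1) -(k4 u v w) + k3 u v w - k3 v u w + k1 u w v
    · intro u v w
      linear_combination (norm := match_scalars <;> (try field_simp [h4]) <;> try ring1) k4 u v w - k1 v u w - k3 v w u
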